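/- Let m ≥ 5 and let p : Fin m → ℝ² be the vertices of a convex polygon listed in circular order. Let i₁ < i₂ < i₃ < i₄ < i₅ be five indices in Fin m, and suppose a point q ∈ ℝ² lies on both the segment joining p i₁ and p i₃ and the segment joining p i₂ and p i₄. Then q ∈ convexHull ℝ {p i₅, p i₂, p i₃}. -/

import Mathlib

/-- The signed area (cross product) of the triangle `o, a, b` in the plane. -/
def cross2 (o a b : Fin 2 → ℝ) : ℝ :=
  (a 0 - o 0) * (b 1 - o 1) - (a 1 - o 1) * (b 0 - o 0)

/-- `p : Fin m → ℝ²` lists the vertices of a convex polygon in circular order: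
for every index `i`, all points `p j` with `j ∉ {i, i+1}` lie strictly on the same
side of the line through `p i` and `p (i+1)` (indices taken mod `m`). -/
def InCircularConvexPosition {m : ℕ} [NeZero m] (p : Fin m → (Fin 2 → ℝ)) : Prop :=
  ∀ i j k : Fin m, j ≠ i → j ≠ i + 1 → k ≠ i → k ≠ i + 1 →
    0 < cross2 (p i) (p (i + 1)) (p j) * cross2 (p i) (p (i + 1)) (p k)

/- basic algebraic lemmas about cross2 -/
lemma cross2_cyclic (a b c : Fin 2 → ℝ) : cross2 a b c = cross2 b c a := by
  simp only [cross2]; ring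

lemma cross2_swap12 (a b c : Fin 2 → ℝ) : cross2 b a c = -cross2 a b c := by
  simp only [cross2]; ring

lemma cross2_self13 (o a : Fin 2 → ℝ) : cross2 o a o = 0 := by simp only [cross2]; ring
lemma cross2_self23 (o a : Fin 2 → ℝ) : cross2 o a a = 0 := by simp only [cross2]; ring

lemma cross2_affine2 (o z x y : Fin 2 → ℝ) (a b : ℝ) (h : a + b = 1) :
    cross2 o z (a • x + b • y) = a * cross2 o z x + b * cross2 o z y := by
  have hb : b = 1 - a := by linarith
  subst hb
  simp only [cross2, Pi.add_apply, Pi.smul_apply, smul_eq_mul]; ring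

lemma cross2_affine3 (o z x y w : Fin 2 → ℝ) (a b c : ℝ) (h : a + b + c = 1) :
    cross2 o z (a • x + b • y + c • w)
      = a * cross2 o z x + b * cross2 o z y + c * cross2 o z w := by
  have hc : c = 1 - a - b := by linarith
  subst hc
  simp only [cross2, Pi.add_apply, Pi.smul_apply, smul_eq_mul]; ring

/-- sign lemma : a zero convex combination of values on one strict side is impossible -/
lemma sign_lemma {A B C α β γ : ℝ} (hAB : 0 < A * B) (hAC : 0 < A * C)
    (hα : 0 ≤ α) (hβ : 0 ≤ β) (hγ : 0 ≤ γ) (hs : α + β + γ = 1)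
    (h0 : α * A + β * B + γ * C = 0) : False := by
  have hA : A ≠ 0 := by rintro rfl; simp at hAB
  have key : ∀ A' B' C' : ℝ, 0 < A' → 0 < B' → 0 < C' →
      α * A' + β * B' + γ * C' = 0 → False := by
    intro A' B' C' hA' hB' hC' h0'
    have t1 : 0 ≤ α * A' := mul_nonneg hα hA'.le
    have t2 : 0 ≤ β * B' := mul_nonneg hβ hB'.le
    have t3 : 0 ≤ γ * C' := mul_nonneg hγ hC'.le
    have e1 : α * A' = 0 := by linarith
    have e2 : β * B' = 0 := by linarith
    have e3 : γ * C' = 0 := by linarith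
    have : α = 0 := by rcases mul_eq_zero.mp e1 with h|h; exact h; exact absurd h hA'.ne'
    have : β = 0 := by rcases mul_eq_zero.mp e2 with h|h; exact h; exact absurd h hB'.ne'
    have : γ = 0 := by rcases mul_eq_zero.mp e3 with h|h; exact h; exact absurd h hC'.ne'
    simp_all
  rcases hA.lt_or_gt with h | h
  · have hB : B < 0 := by nlinarith
    have hC : C < 0 := by nlinarith
    exact key (-A) (-B) (-C) (by linarith) (by linarith) (by linarith) (by linarith)
  · have hB : 0 < B := by nlinarith
    have hC : 0 < C := by nlinarith
    exact key A B C h hB hC h0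

lemma sign_trans {X Y Z : ℝ} (h1 : 0 < X * Y) (h2 : 0 < Y * Z) : 0 < X * Z := by
  have hY : Y ≠ 0 := by rintro rfl; simp at h1
  nlinarith [mul_pos h1 h2, mul_self_pos.mpr hY]

/-- parametrize a point on the line through `a ≠ b` -/
lemma collinear_param (a b c : Fin 2 → ℝ) (hab : a ≠ b) (h : cross2 a b c = 0) :
    ∃ t : ℝ, c = a + t • (b - a) := by
  have hab' : a 0 ≠ b 0 ∨ a 1 ≠ b 1 := by
    by_contra hcon
    push_neg at hcon
    exact hab (funext fun i => by fin_cases i <;> simp [hcon.1, hcon.2])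
  simp only [cross2] at h
  rcases hab' with h0 | h1
  · refine ⟨(c 0 - a 0) / (b 0 - a 0), funext fun i => ?_⟩
    have hne : b 0 - a 0 ≠ 0 := fun hc => h0 (by linarith [sub_eq_zero.mp hc])
    fin_cases i <;> simp only [Fin.zero_eta, Fin.mk_one, Pi.add_apply, Pi.smul_apply, Pi.sub_apply, smul_eq_mul]
    · field_simp; ring
    · field_simp; linear_combination h
  · refine ⟨(c 1 - a 1) / (b 1 - a 1), funext fun i => ?_⟩
    have hne : b 1 - a 1 ≠ 0 := fun hc => h1 (by linarith [sub_eq_zero.mp hc])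
    fin_cases i <;> simp only [Fin.zero_eta, Fin.mk_one, Pi.add_apply, Pi.smul_apply, Pi.sub_apply, smul_eq_mul]
    · field_simp; linear_combination -h
    · field_simp; ring

section CoreLemmas

variable {m : ℕ} [NeZero m]

open Fin.NatCast Fin.CommRing in
lemma fin_natCast_ne_zero (hm : 5 ≤ m) {k : ℕ} (h1 : 0 < k) (h2 : k < 5) :
    ((k : ℕ) : Fin m) ≠ 0 := by
  rw [Ne, Fin.natCast_eq_zero]
  intro h
  exact absurd (Nat.le_of_dvd h1 h) (by omega)

open Fin.NatCast Fin.CommRing in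
lemma fin_add_one_ne (hm : 5 ≤ m) (x : Fin m) : x + 1 ≠ x := by
  intro h
  apply fin_natCast_ne_zero hm (k := 1) (by norm_num) (by norm_num)
  push_cast
  linear_combination h

open Fin.NatCast Fin.CommRing in
lemma fin_add_one_ne_sub_one (hm : 5 ≤ m) (x : Fin m) : x + 1 ≠ x - 1 := by
  intro h
  apply fin_natCast_ne_zero hm (k := 2) (by norm_num) (by norm_num)
  push_cast
  linear_combination h

open Fin.NatCast Fin.CommRing in
lemma fin_add_two_ne_sub_one (hm : 5 ≤ m) (x : Fin m) : x + 1 + 1 ≠ x - 1 := by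
  intro h
  apply fin_natCast_ne_zero hm (k := 3) (by norm_num) (by norm_num)
  push_cast
  linear_combination h

variable (p : Fin m → (Fin 2 → ℝ))

lemma pne (hm : 5 ≤ m) (hp : InCircularConvexPosition p) {u v : Fin m} (huv : u ≠ v) :
    p u ≠ p v := by
  intro h
  by_cases hv : v = u + 1
  · have h5 := hp (u - 1) v v (by rw [hv]; exact fun hc => fin_add_one_ne_sub_one hm u hc)
      (by rw [sub_add_cancel]; exact huv.symm)
      (by rw [hv]; exact fun hc => fin_add_one_ne_sub_one hm u hc)
      (by rw [sub_add_cancel]; exact huv.symm)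
    rw [sub_add_cancel, h, cross2_self23] at h5
    simp at h5
  · have h5 := hp u v v huv.symm hv huv.symm hv
    rw [← h, cross2_self13] at h5
    simp at h5

/-- a vertex cannot lie in the segment between two other vertices -/
lemma L1general (hm : 5 ≤ m) (hp : InCircularConvexPosition p) {w y z : Fin m}
    (hwy : w ≠ y) (hwz : w ≠ z) (hyz : y ≠ z) {s1 s2 : ℝ}
    (hs1 : 0 ≤ s1) (hs2 : 0 ≤ s2) (hs : s1 + s2 = 1)
    (hcomb : p w = s1 • p y + s2 • p z) : False := by
  have key : ∀ i : Fin m, cross2 (p i) (p (i + 1)) (p w) = 0 →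
      y ≠ i → y ≠ i + 1 → z ≠ i → z ≠ i + 1 → False := by
    intro i hzero h1 h2 h3 h4
    have h5 := hp i y z h1 h2 h3 h4
    have haff := cross2_affine2 (p i) (p (i+1)) (p y) (p z) s1 s2 hs
    rw [← hcomb, hzero] at haff
    exact sign_lemma h5 h5 hs1 hs2 le_rfl (by linarith) (by linarith)
  by_cases hy1 : y = w + 1
  · by_cases hz1 : z = w - 1
    · -- y = w+1, z = w-1 : the three points are collinear, contradiction
      have hcol : cross2 (p (w-1)) (p w) (p (w+1)) = 0 := by
        rw [hcomb, hy1, hz1]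
        have h2' : s2 = 1 - s1 := by linarith
        subst h2'
        simp only [cross2, Pi.add_apply, Pi.smul_apply, smul_eq_mul]
        ring
      have h5 := hp (w-1) (w+1) (w+1)
        (fun hc => fin_add_one_ne_sub_one hm w hc)
        (by rw [sub_add_cancel]; exact fin_add_one_ne hm w)
        (fun hc => fin_add_one_ne_sub_one hm w hc)
        (by rw [sub_add_cancel]; exact fin_add_one_ne hm w)
      rw [sub_add_cancel, hcol] at h5
      simp at h5
    · -- use edge (w-1, w)
      refine key (w-1) ?_ ?_ ?_ ?_ ?_
      · rw [sub_add_cancel]; exact cross2_self23 _ _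
      · rw [hy1]; exact fun hc => fin_add_one_ne_sub_one hm w hc
      · rw [sub_add_cancel]; exact hwy.symm
      · exact hz1
      · rw [sub_add_cancel]; exact hwz.symm
  · by_cases hz1 : z = w + 1
    · by_cases hy2 : y = w - 1
      · -- z = w+1, y = w-1 : collinear again
        have hcol : cross2 (p (w-1)) (p w) (p (w+1)) = 0 := by
          rw [hcomb, hz1, hy2]
          have h2' : s2 = 1 - s1 := by linarith
          subst h2'
          simp only [cross2, Pi.add_apply, Pi.smul_apply, smul_eq_mul]
          ring
        have h5 := hp (w-1) (w+1) (w+1)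
          (fun hc => fin_add_one_ne_sub_one hm w hc)
          (by rw [sub_add_cancel]; exact fin_add_one_ne hm w)
          (fun hc => fin_add_one_ne_sub_one hm w hc)
          (by rw [sub_add_cancel]; exact fin_add_one_ne hm w)
        rw [sub_add_cancel, hcol] at h5
        simp at h5
      · refine key (w-1) ?_ ?_ ?_ ?_ ?_
        · rw [sub_add_cancel]; exact cross2_self23 _ _
        · exact hy2
        · rw [sub_add_cancel]; exact hwy.symm
        · rw [hz1]; exact fun hc => fin_add_one_ne_sub_one hm w hc
        · rw [sub_add_cancel]; exact hwz.symm
    · -- use edge (w, w+1)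
      exact key w (cross2_self13 _ _) hwy.symm hy1 hwz.symm hz1

/-- a vertex cannot lie in the triangle spanned by a non-neighboring vertex and
an edge not containing it -/
lemma L3 (hm : 5 ≤ m) (hp : InCircularConvexPosition p) {w y j : Fin m}
    (hwy : y ≠ w) (hyw1 : y ≠ w + 1) (hy1w : y + 1 ≠ w)
    (hjw : j ≠ w) (hj1w : j + 1 ≠ w)
    {α β γ : ℝ} (hα : 0 ≤ α) (hβ : 0 ≤ β) (hγ : 0 ≤ γ) (hs : α + β + γ = 1)
    (hcomb : p w = α • p y + β • p j + γ • p (j + 1)) : False := by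
  have key : ∀ i : Fin m, cross2 (p i) (p (i + 1)) (p w) = 0 →
      y ≠ i → y ≠ i + 1 → j ≠ i → j ≠ i + 1 → j + 1 ≠ i → j + 1 ≠ i + 1 → False := by
    intro i hzero h1 h2 h3 h4 h5 h6
    have e1 := hp i y j h1 h2 h3 h4
    have e2 := hp i y (j+1) h1 h2 h5 h6
    have haff := cross2_affine3 (p i) (p (i+1)) (p y) (p j) (p (j+1)) α β γ hs
    rw [← hcomb, hzero] at haff
    exact sign_lemma e1 e2 hα hβ hγ hs (by linarith)
  by_cases hj1 : j = w + 1
  · -- use edge (w-1, w)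
    refine key (w-1) ?_ ?_ ?_ ?_ ?_ ?_ ?_
    · rw [sub_add_cancel]; exact cross2_self23 _ _
    · intro hc; exact hy1w (by rw [hc, sub_add_cancel])
    · rw [sub_add_cancel]; exact hwy
    · rw [hj1]; exact fun hc => fin_add_one_ne_sub_one hm w hc
    · rw [sub_add_cancel]; exact hjw
    · rw [hj1]; exact fun hc => fin_add_two_ne_sub_one hm w hc
    · rw [sub_add_cancel]; exact hj1w
  · -- use edge (w, w+1)
    refine key w (cross2_self13 _ _) hwy hyw1 hjw hj1 hj1w ?_
    intro hc
    exact hjw (add_right_cancel hc)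
end CoreLemmas

section CoreLemmas2

variable {m : ℕ} [NeZero m] (p : Fin m → (Fin 2 → ℝ))

/-- helper for `adj` : a point of the segment `[p j, p (j+1)]` cannot lie on the
line through `p u` and `p v` when `u, v` are non-adjacent and distinct from `j, j+1`. -/
lemma trapped (hm : 5 ≤ m) (hp : InCircularConvexPosition p) {u v j : Fin m}
    (huv : u ≠ v) (hvu1 : v ≠ u + 1) (huv1 : u ≠ v + 1)
    (hju : j ≠ u) (hjv : j ≠ v) (hj1u : j + 1 ≠ u) (hj1v : j + 1 ≠ v)
    {x : Fin 2 → ℝ} {c1 c2 : ℝ} (hc1 : 0 ≤ c1) (hc2 : 0 ≤ c2) (hcs : c1 + c2 = 1)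
    (hx : x = c1 • p j + c2 • p (j + 1))
    {t : ℝ} (hcol : x = p u + t • (p v - p u)) : False := by
  rcases le_or_gt t 1 with ht1 | ht1
  · rcases le_or_gt 0 t with ht0 | ht0
    · -- x lies on the segment [p u, p v]
      have hxseg : x = (1 - t) • p u + t • p v := by rw [hcol]; module
      have h5 := hp j u v hju.symm hj1u.symm hjv.symm hj1v.symm
      have hgx : cross2 (p j) (p (j+1)) x = 0 := by
        rw [hx, cross2_affine2 _ _ _ _ _ _ hcs, cross2_self13, cross2_self23]
        ring
      rw [hxseg, cross2_affine2 _ _ _ _ _ _ (by ring : (1 - t) + t = 1)] at hgx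
      exact sign_lemma (α := 1 - t) (β := t) (γ := 0) h5 h5 (by linarith) (by linarith)
        le_rfl (by ring) (by linarith)
    · -- t < 0 : p u lies in the triangle p v, p j, p (j+1)
      have h1tpos : (0:ℝ) < 1 - t := by linarith
      have e : (1 - t) • p u = x - t • p v := by rw [hcol]; module
      have hu : p u = (-t/(1-t)) • p v + ((1-t)⁻¹ * c1) • p j
          + ((1-t)⁻¹ * c2) • p (j+1) := by
        have : p u = (1-t)⁻¹ • (x - t • p v) := by
          rw [← e, smul_smul, inv_mul_cancel₀ h1tpos.ne', one_smul]
        rw [this, hx]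
        match_scalars <;> field_simp <;> try ring
      exact L3 p hm hp huv.symm hvu1 (fun h => huv1 h.symm) hju hj1u
        (div_nonneg (by linarith) h1tpos.le)
        (mul_nonneg (by positivity) hc1) (mul_nonneg (by positivity) hc2)
        (by have hc2' : c2 = 1 - c1 := by linarith
            subst hc2'; field_simp; try ring) hu
  · -- t > 1 : p v lies in the triangle p u, p j, p (j+1)
    have htpos : (0:ℝ) < t := by linarith
    have e : t • p v = x - (1 - t) • p u := by rw [hcol]; module
    have hv : p v = ((t-1)/t) • p u + (t⁻¹ * c1) • p j + (t⁻¹ * c2) • p (j+1) := by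
      have : p v = t⁻¹ • (x - (1 - t) • p u) := by
        rw [← e, smul_smul, inv_mul_cancel₀ htpos.ne', one_smul]
      rw [this, hx]
      match_scalars <;> field_simp <;> try ring
    exact L3 p hm hp huv huv1 (fun h => hvu1 h.symm) hjv hj1v
      (div_nonneg (by linarith) htpos.le)
      (mul_nonneg (by positivity) hc1) (mul_nonneg (by positivity) hc2)
      (by have hc2' : c2 = 1 - c1 := by linarith
          subst hc2'; field_simp; try ring) hv

/-- the key lemma : two consecutive vertices not on a chord lie strictly
on the same side of it -/
lemma adj (hm : 5 ≤ m) (hp : InCircularConvexPosition p) {u v j : Fin m}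
    (huv : u ≠ v) (hju : j ≠ u) (hjv : j ≠ v) (hj1u : j + 1 ≠ u) (hj1v : j + 1 ≠ v) :
    0 < cross2 (p u) (p v) (p j) * cross2 (p u) (p v) (p (j + 1)) := by
  by_cases hvu1 : v = u + 1
  · have h5 := hp u j (j+1) hju (by rw [← hvu1]; exact hjv) hj1u (by rw [← hvu1]; exact hj1v)
    rw [← hvu1] at h5
    exact h5
  by_cases huv1 : u = v + 1
  · have h5 := hp v j (j+1) hjv (by rw [← huv1]; exact hju) hj1v (by rw [← huv1]; exact hj1u)
    rw [← huv1, cross2_swap12 (p u) (p v) (p j), cross2_swap12 (p u) (p v) (p (j+1)),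
      neg_mul_neg] at h5
    exact h5
  · by_contra hcon
    push_neg at hcon
    have hab : p u ≠ p v := pne p hm hp huv
    rcases eq_or_ne (cross2 (p u) (p v) (p j)) 0 with hc0 | hc0
    · obtain ⟨t, ht⟩ := collinear_param _ _ _ hab hc0
      exact trapped p hm hp huv hvu1 huv1 hju hjv hj1u hj1v (x := p j) (c1 := 1) (c2 := 0)
        zero_le_one le_rfl (by ring) (by simp) ht
    rcases eq_or_ne (cross2 (p u) (p v) (p (j+1))) 0 with hd0 | hd0
    · obtain ⟨t, ht⟩ := collinear_param _ _ _ hab hd0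
      exact trapped p hm hp huv hvu1 huv1 hju hjv hj1u hj1v (x := p (j+1)) (c1 := 0) (c2 := 1)
        le_rfl zero_le_one (by ring) (by simp) ht
    · -- the two cross products have opposite signs : the segment crosses the line
      set X := cross2 (p u) (p v) (p j) with hX
      set Y := cross2 (p u) (p v) (p (j+1)) with hY
      have hXY : X * Y < 0 := lt_of_le_of_ne hcon (mul_ne_zero hc0 hd0)
      have hden : X - Y ≠ 0 := by
        intro h
        have hXY' : X = Y := by linarith
        rw [hXY'] at hXY
        nlinarith [mul_self_nonneg Y]
      set μ := X / (X - Y) with hμ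
      have hμ0 : 0 ≤ μ ∧ μ ≤ 1 := by
        rcases mul_neg_iff.mp hXY with ⟨h1, h2⟩ | ⟨h1, h2⟩
        · constructor
          · exact div_nonneg h1.le (by linarith)
          · rw [div_le_one (by linarith)]; linarith
        · constructor
          · exact le_of_lt (div_pos_iff.mpr (Or.inr ⟨h1, by linarith⟩))
          · rw [div_le_one_iff]; right; right; exact ⟨by linarith, by linarith⟩
      have hfx : cross2 (p u) (p v) ((1-μ) • p j + μ • p (j+1)) = 0 := by
        rw [cross2_affine2 _ _ _ _ _ _ (by ring : (1-μ) + μ = 1), ← hX, ← hY, hμ]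
        field_simp
        ring
      obtain ⟨t, ht⟩ := collinear_param _ _ _ hab hfx
      exact trapped p hm hp huv hvu1 huv1 hju hjv hj1u hj1v
        (c1 := 1 - μ) (c2 := μ)
        (by linarith [hμ0.2]) hμ0.1 (by ring) rfl ht

/-- nondegeneracy : no three distinct vertices are collinear -/
lemma Ncross (hm : 5 ≤ m) (hp : InCircularConvexPosition p) {u v j : Fin m}
    (huv : u ≠ v) (hju : j ≠ u) (hjv : j ≠ v) :
    cross2 (p u) (p v) (p j) ≠ 0 := by
  intro h0
  have hab : p u ≠ p v := pne p hm hp huv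
  obtain ⟨t, ht⟩ := collinear_param _ _ _ hab h0
  rcases le_or_gt t 1 with ht1 | ht1
  · rcases le_or_gt 0 t with ht0 | ht0
    · exact L1general p hm hp (s1 := 1 - t) (s2 := t) hju hjv huv (by linarith) ht0
        (by ring) (by rw [ht]; module)
    · have h1tpos : (0:ℝ) < 1 - t := by linarith
      have e : (1 - t) • p u = p j - t • p v := by rw [ht]; module
      have hu : p u = (-t/(1-t)) • p v + (1-t)⁻¹ • p j := by
        have h2 : p u = (1-t)⁻¹ • (p j - t • p v) := by
          rw [← e, smul_smul, inv_mul_cancel₀ h1tpos.ne', one_smul]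
        rw [h2]
        match_scalars <;> field_simp
      exact L1general p hm hp huv hju.symm hjv.symm
        (div_nonneg (by linarith) h1tpos.le) (inv_nonneg.mpr h1tpos.le)
        (by field_simp; try ring) hu
  · have htpos : (0:ℝ) < t := by linarith
    have e : t • p v = p j - (1 - t) • p u := by rw [ht]; module
    have hv : p v = ((t-1)/t) • p u + t⁻¹ • p j := by
      have h2 : p v = t⁻¹ • (p j - (1 - t) • p u) := by
        rw [← e, smul_smul, inv_mul_cancel₀ htpos.ne', one_smul]
      rw [h2]
      match_scalars <;> field_simp <;> try ring
    exact L1general p hm hp huv.symm hjv.symm hju.symm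
      (div_nonneg (by linarith) htpos.le) (inv_nonneg.mpr htpos.le)
      (by field_simp; try ring) hv

end CoreLemmas2

section Chain

variable {m : ℕ} [NeZero m] (p : Fin m → (Fin 2 → ℝ))

lemma chain (hm : 5 ≤ m) (hp : InCircularConvexPosition p) (u v : Fin m) (huv : u ≠ v) :
    ∀ n (j k : Fin m), j.val + n = k.val →
      (∀ t : Fin m, j.val ≤ t.val → t.val ≤ k.val → t ≠ u ∧ t ≠ v) →
      0 < cross2 (p u) (p v) (p j) * cross2 (p u) (p v) (p k) := by
  intro n
  induction n with
  | zero =>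
    intro j k hval havoid
    have hjk : j = k := Fin.ext (by omega)
    subst hjk
    have h := havoid j le_rfl le_rfl
    exact mul_self_pos.mpr (Ncross p hm hp huv h.1 h.2)
  | succ n ih =>
    intro j k hval havoid
    have hj1val : ((j + 1 : Fin m)).val = j.val + 1 := by
      rw [Fin.val_add, Fin.val_one', Nat.mod_eq_of_lt (show 1 < m by omega),
        Nat.mod_eq_of_lt (by omega)]
    have hj := havoid j le_rfl (by omega)
    have hj1 := havoid (j+1) (by omega) (by omega)
    have P1 := adj p hm hp huv hj.1 hj.2 hj1.1 hj1.2
    have P2 := ih (j+1) k (by omega) (fun t h1 h2 => havoid t (by omega) h2)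
    exact sign_trans P1 P2

/-- same-side statement for two vertices in the "wrap-around" arc of the chord `(u,v)` -/
lemma chain_mixed (hm : 5 ≤ m) (hp : InCircularConvexPosition p) {u v j k : Fin m}
    (hju : j < u) (huv : u < v) (hvk : v < k) :
    0 < cross2 (p u) (p v) (p j) * cross2 (p u) (p v) (p k) := by
  have huv' : u ≠ v := ne_of_lt huv
  set L : Fin m := ⟨m - 1, by omega⟩ with hLdef
  have hL1 : L + 1 = (0 : Fin m) := by
    apply Fin.ext
    rw [Fin.val_add, Fin.val_one', Nat.mod_eq_of_lt (show 1 < m by omega)]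
    show (m - 1 + 1) % m = 0
    have h : m - 1 + 1 = m := by omega
    rw [h, Nat.mod_self]
  have hz0 : (0 : Fin m).val = 0 := rfl
  have c1 := chain p hm hp u v huv' j.val 0 j (by omega)
    (fun t h1 h2 => ⟨fun hc => by subst hc; omega, fun hc => by subst hc; omega⟩)
  have c2 := chain p hm hp u v huv' (m - 1 - k.val) k L (by simp only [hLdef]; omega)
    (fun t h1 h2 => ⟨fun hc => by subst hc; omega, fun hc => by subst hc; omega⟩)
  have hLval : L.val = m - 1 := rfl
  have bridge := adj p hm hp huv' (u := u) (v := v) (j := L)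
    (Fin.ne_of_val_ne (by omega)) (Fin.ne_of_val_ne (by omega))
    (by rw [hL1]; exact Fin.ne_of_val_ne (by omega))
    (by rw [hL1]; exact Fin.ne_of_val_ne (by omega))
  rw [hL1] at bridge
  -- compose : j ~ 0 ~ L ~ k
  have s1 : 0 < cross2 (p u) (p v) (p j) * cross2 (p u) (p v) (p 0) := by
    rwa [mul_comm] at c1
  have s2 : 0 < cross2 (p u) (p v) (p 0) * cross2 (p u) (p v) (p L) := by
    rwa [mul_comm] at bridge
  have s3 : 0 < cross2 (p u) (p v) (p L) * cross2 (p u) (p v) (p k) := by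
    rwa [mul_comm] at c2
  exact sign_trans (sign_trans s1 s2) s3

end Chain

/-- Lemma 5 of the paper: if the vertices of a convex polygon are
listed in circular order and `q` lies on both the segment `[p i₁, p i₃]` and the
segment `[p i₂, p i₄]`, where `i₁ < i₂ < i₃ < i₄ < i₅`, then `q` lies in the
triangle spanned by `p i₅, p i₂, p i₃`. -/
theorem stmt_10 (m : ℕ) [NeZero m] (hm : 5 ≤ m) (p : Fin m → (Fin 2 → ℝ))
    (hp : InCircularConvexPosition p)
    (i₁ i₂ i₃ i₄ i₅ : Fin m)
    (h12 : i₁ < i₂) (h23 : i₂ < i₃) (h34 : i₃ < i₄) (h45 : i₄ < i₅)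
    (q : Fin 2 → ℝ)
    (hq1 : q ∈ segment ℝ (p i₁) (p i₃))
    (hq2 : q ∈ segment ℝ (p i₂) (p i₄)) :
    q ∈ convexHull ℝ ({p i₅, p i₂, p i₃} : Set (Fin 2 → ℝ)) := by
  obtain ⟨s1, s2, hs1, hs2, hs12, hqs⟩ := hq1
  obtain ⟨t1, t2, ht1, ht2, ht12, hqt⟩ := hq2
  -- same-side facts from convex position
  have hα : 0 < cross2 (p i₂) (p i₃) (p i₁) * cross2 (p i₂) (p i₃) (p i₅) :=
    chain_mixed p hm hp h12 h23 (h34.trans h45)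
  have hβ : 0 < cross2 (p i₃) (p i₅) (p i₁) * cross2 (p i₃) (p i₅) (p i₂) :=
    chain p hm hp i₃ i₅ (Fin.ne_of_lt (h34.trans h45)) (i₂.val - i₁.val) i₁ i₂
      (by omega)
      (fun t h1 h2 => ⟨fun hc => by subst hc; omega, fun hc => by subst hc; omega⟩)
  have hγ : 0 < cross2 (p i₂) (p i₅) (p i₃) * cross2 (p i₂) (p i₅) (p i₄) :=
    chain p hm hp i₂ i₅ (Fin.ne_of_lt ((h23.trans h34).trans h45)) (i₄.val - i₃.val) i₃ i₄
      (by omega)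
      (fun t h1 h2 => ⟨fun hc => by subst hc; omega, fun hc => by subst hc; omega⟩)
  set A := p i₅ with hA
  set B := p i₂ with hB
  set C := p i₃ with hC
  set D := cross2 A B C with hD
  set X1 := cross2 B C q with hX1
  set X2 := cross2 C A q with hX2
  set X3 := cross2 A B q with hX3
  -- signed expressions of the barycentric numerators
  have hX1e : X1 = s1 * cross2 B C (p i₁) := by
    rw [hX1, ← hqs, hC, cross2_affine2 _ _ _ _ _ _ hs12, cross2_self23]; ring
  have hX2e : X2 = s1 * cross2 C A (p i₁) := by
    rw [hX2, ← hqs, hC, cross2_affine2 _ _ _ _ _ _ hs12, cross2_self13]; ring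
  have hX3e : X3 = t2 * cross2 A B (p i₄) := by
    rw [hX3, ← hqt, hB, cross2_affine2 _ _ _ _ _ _ ht12, cross2_self23]; ring
  -- positivity of the products with D
  have hD1 : 0 < D * cross2 B C (p i₁) := by
    have e1 : D = cross2 B C A := by rw [hD, cross2_cyclic]
    rw [e1, mul_comm]
    exact hα
  have hD2 : 0 < D * cross2 C A (p i₁) := by
    have e2 : D = cross2 C A B := by rw [hD, cross2_cyclic, cross2_cyclic]
    rw [e2, mul_comm]
    exact hβ
  have hD3 : 0 < D * cross2 A B (p i₄) := by
    have e3 : D = -cross2 B A C := by rw [hD, cross2_swap12]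
    have e4 : cross2 A B (p i₄) = -cross2 B A (p i₄) := by rw [cross2_swap12]
    rw [e3, e4, neg_mul_neg]
    exact hγ
  have hD0 : D ≠ 0 := by
    intro h
    rw [h, zero_mul] at hD1
    exact lt_irrefl 0 hD1
  -- the barycentric weights
  set α := X1 / D with hαdef
  set β := X2 / D with hβdef
  set γ := X3 / D with hγdef
  have hαnn : 0 ≤ α := by
    rw [hαdef, show X1 / D = (D * X1) / (D * D) by field_simp]
    exact div_nonneg (by rw [hX1e]; nlinarith [mul_nonneg hD1.le hs1])
      (mul_self_nonneg D)
  have hβnn : 0 ≤ β := by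
    rw [hβdef, show X2 / D = (D * X2) / (D * D) by field_simp]
    exact div_nonneg (by rw [hX2e]; nlinarith [mul_nonneg hD2.le hs1])
      (mul_self_nonneg D)
  have hγnn : 0 ≤ γ := by
    rw [hγdef, show X3 / D = (D * X3) / (D * D) by field_simp]
    exact div_nonneg (by rw [hX3e]; nlinarith [mul_nonneg hD3.le ht2])
      (mul_self_nonneg D)
  have hkey : X1 + X2 + X3 = D := by
    rw [hX1, hX2, hX3, hD]; simp only [cross2]; ring
  have hsum : α + β + γ = 1 := by
    rw [hαdef, hβdef, hγdef]
    field_simp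
    linarith
  have hcombo : q = α • A + β • B + γ • C := by
    funext i
    have cramer : X1 * A i + X2 * B i + X3 * C i = D * q i := by
      rw [hX1, hX2, hX3, hD]
      fin_cases i <;> (simp only [Fin.zero_eta, Fin.mk_one, cross2]; ring)
    simp only [Pi.add_apply, Pi.smul_apply, smul_eq_mul, hαdef, hβdef, hγdef]
    field_simp
    linarith [cramer]
  -- conclude
  have hAm : A ∈ ({A, B, C} : Set (Fin 2 → ℝ)) := by simp
  have hBm : B ∈ ({A, B, C} : Set (Fin 2 → ℝ)) := by simp
  have hCm : C ∈ ({A, B, C} : Set (Fin 2 → ℝ)) := by simp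
  rcases eq_or_ne (β + γ) 0 with h0 | h0
  · have hβ0 : β = 0 := by linarith
    have hγ0 : γ = 0 := by linarith
    have hα1 : α = 1 := by linarith
    have : q = A := by rw [hcombo, hβ0, hγ0, hα1]; simp
    rw [this]
    exact subset_convexHull ℝ _ hAm
  · have hβγpos : 0 < β + γ := lt_of_le_of_ne (by linarith) (Ne.symm h0)
    set z := (β/(β+γ)) • B + (γ/(β+γ)) • C with hzdef
    have hz : z ∈ segment ℝ B C :=
      ⟨β/(β+γ), γ/(β+γ), div_nonneg hβnn hβγpos.le, div_nonneg hγnn hβγpos.le,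
        by field_simp, rfl⟩
    have hzc : z ∈ convexHull ℝ ({A, B, C} : Set (Fin 2 → ℝ)) :=
      segment_subset_convexHull hBm hCm hz
    have hAc : A ∈ convexHull ℝ ({A, B, C} : Set (Fin 2 → ℝ)) :=
      subset_convexHull ℝ _ hAm
    have hqseg : q ∈ segment ℝ A z := by
      refine ⟨α, β + γ, hαnn, hβγpos.le, by linarith, ?_⟩
      rw [hcombo, hzdef]
      match_scalars <;> field_simp
    exact (convex_convexHull ℝ _).segment_subset hAc hzc hqseg
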